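/- Let H be a finite Borel measure on Δ_{d-1} with ∫ w_j H(dw) = 1 for all j, and l(x) = ∫ max_j (w_j x_j) H(dw). For each j and each x ∈ [0,∞)^d, the right-hand partial derivative of l in the j-th coordinate at x exists and equals ∫_{Δ_{d-1}} w_j 1{ w_j x_j ≥ max_{s≠j} w_s x_s } H(dw), i.e. (l(x + h e_j) − l(x))/h converges to this integral as h ↓ 0. -/

import Mathlib

open MeasureTheory

def unitSimplex (d : ℕ) : Set (Fin d → ℝ) :=
  {w | (∀ j, 0 ≤ w j ∧ w j ≤ 1) ∧ ∑ j, w j = 1}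

/-- The stable tail dependence function associated to a spectral measure `H`. -/
noncomputable def stdf {d : ℕ} (H : Measure (Fin d → ℝ)) (x : Fin d → ℝ) : ℝ :=
  ∫ w, (⨆ j, w j * x j) ∂H

theorem stmt_5 (d : ℕ) (hd : 1 ≤ d) (H : Measure (Fin d → ℝ)) [IsFiniteMeasure H]
    (hsupp : H (unitSimplex d)ᶜ = 0)
    (hmom : ∀ j : Fin d, ∫ w, w j ∂H = 1)
    (x : Fin d → ℝ) (hx : ∀ j, 0 ≤ x j) (j : Fin d) :
    Filter.Tendsto
      (fun h : ℝ => (stdf H (x + h • (Pi.single j 1 : Fin d → ℝ)) - stdf H x) / h)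
      (nhdsWithin 0 (Set.Ioi 0))
      (nhds (∫ w,
        Set.indicator {w : Fin d → ℝ | ∀ s, s ≠ j → w s * x s ≤ w j * x j}
          (fun w => w j) w ∂H)) := by
  haveI : Nonempty (Fin d) := ⟨⟨0, hd⟩⟩
  set S : Set (Fin d → ℝ) := {w : Fin d → ℝ | ∀ s, s ≠ j → w s * x s ≤ w j * x j} with hS
  set g : ℝ → (Fin d → ℝ) → ℝ := fun h w =>
    Finset.univ.sup' Finset.univ_nonempty
      (fun s => w s * (x s + h * (if s = j then 1 else 0))) with hg
  -- basic sup' facts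
  have hle : ∀ (h : ℝ) (w : Fin d → ℝ) (s : Fin d),
      w s * (x s + h * (if s = j then 1 else 0)) ≤ g h w := fun h w s =>
    Finset.le_sup' (fun s => w s * (x s + h * (if s = j then 1 else 0))) (Finset.mem_univ s)
  have hle0 : ∀ (w : Fin d → ℝ) (s : Fin d), w s * x s ≤ g 0 w := by
    intro w s
    have h0 : w s * x s = w s * (x s + 0 * (if s = j then 1 else 0)) := by ring
    rw [h0]; exact hle 0 w s
  have hlej : ∀ (w : Fin d → ℝ) (h : ℝ), w j * x j + w j * h ≤ g h w := by
    intro w h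
    have h0 : w j * x j + w j * h = w j * (x j + h * (if j = j then 1 else 0)) := by
      simp; ring
    rw [h0]; exact hle h w j
  have hsup_le : ∀ (h : ℝ) (w : Fin d → ℝ) (c : ℝ),
      (∀ s, w s * (x s + h * (if s = j then 1 else 0)) ≤ c) → g h w ≤ c := fun h w c hc =>
    Finset.sup'_le _ _ fun s _ => hc s
  -- a.e. membership in the simplex
  have hae : ∀ᵐ w ∂H, w ∈ unitSimplex d := by
    rw [MeasureTheory.ae_iff]; exact hsupp
  -- stdf as integral of g
  have hstdf : ∀ h : ℝ, stdf H (x + h • (Pi.single j 1 : Fin d → ℝ)) = ∫ w, g h w ∂H := by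
    intro h
    unfold stdf
    congr 1
    funext w
    rw [hg, ← Finset.sup'_univ_eq_ciSup]
    congr 1
    funext s
    simp [Pi.single_apply, mul_comm]
  have hstdf0 : stdf H x = ∫ w, g 0 w ∂H := by simpa using hstdf 0
  -- continuity of g h
  have hcont : ∀ h : ℝ, Continuous (g h) := by
    intro h
    apply Continuous.finset_sup'_apply
    intro s _
    exact (continuous_apply s).mul continuous_const
  -- integrability of g h
  have hint : ∀ h : ℝ, Integrable (g h) H := by
    intro h
    refine (integrable_const ((∑ s, |x s|) + |h|)).mono' ((hcont h).aestronglyMeasurable) ?_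
    filter_upwards [hae] with w hw
    have hb : ∀ s : Fin d, |w s * (x s + h * (if s = j then 1 else 0))| ≤ (∑ s, |x s|) + |h| := by
      intro s
      have h1 : |w s| ≤ 1 := by
        rw [abs_le]; exact ⟨le_trans (by norm_num) (hw.1 s).1, (hw.1 s).2⟩
      have h5 : |x s| ≤ ∑ s, |x s| :=
        Finset.single_le_sum (f := fun s => |x s|) (fun i _ => abs_nonneg _) (Finset.mem_univ s)
      have h6 : |h * (if s = j then 1 else 0)| ≤ |h| := by
        rw [abs_mul]
        split_ifs <;> simp [abs_nonneg]
      calc |w s * (x s + h * (if s = j then 1 else 0))|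
          = |w s| * |x s + h * (if s = j then 1 else 0)| := abs_mul _ _
        _ ≤ 1 * |x s + h * (if s = j then 1 else 0)| :=
            mul_le_mul_of_nonneg_right h1 (abs_nonneg _)
        _ = |x s + h * (if s = j then 1 else 0)| := one_mul _
        _ ≤ |x s| + |h * (if s = j then 1 else 0)| := abs_add_le _ _
        _ ≤ (∑ s, |x s|) + |h| := by linarith
    rw [Real.norm_eq_abs, abs_le]
    constructor
    · have h3 := hb j
      have h4 := neg_abs_le (w j * (x j + h * (if j = j then 1 else 0)))
      have h2 : -((∑ s, |x s|) + |h|) ≤ w j * (x j + h * (if j = j then 1 else 0)) := by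
        linarith
      exact h2.trans (hle h w j)
    · exact hsup_le h w _ fun s => (abs_le.mp (hb s)).2
  -- key two-sided bounds for nonnegative w
  have key : ∀ w : Fin d → ℝ, (∀ s, 0 ≤ w s) → ∀ h : ℝ, 0 < h →
      g 0 w ≤ g h w ∧ g h w ≤ g 0 w + w j * h := by
    intro w hw h hh
    constructor
    · apply Finset.sup'_mono_fun
      intro s _
      have h1 : (0:ℝ) ≤ h * (if s = j then 1 else 0) := by positivity
      nlinarith [hw s]
    · apply hsup_le
      intro s
      by_cases hs : s = j
      · subst hs
        rw [if_pos rfl, mul_one]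
        have := hle0 w s
        nlinarith
      · simp only [if_neg hs, mul_zero, add_zero]
        have := hle0 w s
        nlinarith [mul_nonneg (hw j) hh.le]
  -- pointwise limit
  have hlim : ∀ᵐ w ∂H, Filter.Tendsto (fun h : ℝ => (g h w - g 0 w) / h)
      (nhdsWithin 0 (Set.Ioi 0)) (nhds (Set.indicator S (fun w => w j) w)) := by
    filter_upwards [hae] with w hw
    have hwpos : ∀ s, 0 ≤ w s := fun s => (hw.1 s).1
    by_cases hmem : w ∈ S
    · rw [Set.indicator_of_mem hmem]
      have heq : ∀ h : ℝ, h ∈ Set.Ioi (0:ℝ) → (g h w - g 0 w) / h = w j := by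
        intro h hh
        rw [Set.mem_Ioi] at hh
        have h0 : g 0 w = w j * x j := by
          refine le_antisymm (hsup_le 0 w _ fun s => ?_) ?_
          · by_cases hs : s = j
            · subst hs; simp
            · have := hmem s hs
              simp only [if_neg hs, mul_zero, mul_one, add_zero]
              nlinarith
          · have := hlej w 0; simpa using this
        have hgh : g h w = w j * x j + w j * h := by
          refine le_antisymm (hsup_le h w _ fun s => ?_) (hlej w h)
          by_cases hs : s = j
          · subst hs; simp [mul_add]
          · simp only [if_neg hs, mul_zero, add_zero]
            have := hmem s hs
            nlinarith [mul_nonneg (hwpos j) hh.le]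
        rw [hgh, h0]
        field_simp
        ring
      refine Filter.Tendsto.congr' ?_ tendsto_const_nhds
      filter_upwards [self_mem_nhdsWithin] with h hh
      exact (heq h hh).symm
    · rw [Set.indicator_of_notMem hmem]
      simp only [hS, Set.mem_setOf_eq] at hmem
      push_neg at hmem
      obtain ⟨s₀, hs₀ne, hs₀⟩ := hmem
      have hM : w j * x j < g 0 w := lt_of_lt_of_le hs₀ (hle0 w s₀)
      set ε := (g 0 w - w j * x j) / (w j + 1) with hε
      have hwj1 : (0:ℝ) < w j + 1 := by nlinarith [hwpos j]
      have hεpos : 0 < ε := div_pos (by linarith) hwj1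
      have heq : ∀ h : ℝ, h ∈ Set.Ioo (0:ℝ) ε → (g h w - g 0 w) / h = 0 := by
        intro h hh
        have hh1 : 0 < h := hh.1
        have hh2 : h < ε := hh.2
        have hjh : w j * h < g 0 w - w j * x j := by
          have h3 : (w j + 1) * h < g 0 w - w j * x j := by
            calc (w j + 1) * h < (w j + 1) * ε := mul_lt_mul_of_pos_left hh2 hwj1
              _ = g 0 w - w j * x j := by rw [hε]; field_simp
          nlinarith [hwpos j]
        have hgh : g h w = g 0 w := by
          refine le_antisymm (hsup_le h w _ fun s => ?_) (key w hwpos h hh1).1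
          by_cases hs : s = j
          · subst hs
            rw [if_pos rfl, mul_one]
            nlinarith
          · simp only [if_neg hs, mul_zero, add_zero]
            exact hle0 w s
        rw [hgh]
        simp
      refine Filter.Tendsto.congr' ?_ tendsto_const_nhds
      have hmemIoo : Set.Ioo (0:ℝ) ε ∈ nhdsWithin 0 (Set.Ioi 0) :=
        Ioo_mem_nhdsGT_of_mem ⟨le_refl 0, hεpos⟩
      filter_upwards [hmemIoo] with h hh
      exact (heq h hh).symm
  -- uniform bound
  have hbound : ∀ᶠ h : ℝ in nhdsWithin 0 (Set.Ioi 0),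
      ∀ᵐ w ∂H, ‖(g h w - g 0 w) / h‖ ≤ (1:ℝ) := by
    filter_upwards [self_mem_nhdsWithin] with h hh
    rw [Set.mem_Ioi] at hh
    filter_upwards [hae] with w hw
    have hk := key w (fun s => (hw.1 s).1) h hh
    rw [Real.norm_eq_abs, abs_div, abs_of_pos hh, div_le_one hh, abs_le]
    constructor
    · nlinarith
    · nlinarith [(hw.1 j).2, hk.2]
  -- dominated convergence
  have hmain := MeasureTheory.tendsto_integral_filter_of_dominated_convergence
    (μ := H) (l := nhdsWithin (0:ℝ) (Set.Ioi 0))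
    (F := fun h w => (g h w - g 0 w) / h)
    (f := Set.indicator S (fun w => w j))
    (fun _ => (1:ℝ))
    (Filter.Eventually.of_forall fun h =>
      (((hcont h).sub (hcont 0)).div_const h).aestronglyMeasurable)
    hbound (integrable_const 1) hlim
  refine hmain.congr' ?_
  filter_upwards [self_mem_nhdsWithin] with h hh
  rw [Set.mem_Ioi] at hh
  rw [hstdf h, hstdf0, ← integral_sub (hint h) (hint 0), ← integral_div]
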